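/- Let H ∈ (1/2, 1). For all u, v ∈ ℝ, ∫_ℝ (u-y)_+^{-(1/2+(1-H))} (v-y)_+^{-(1/2+(1-H))} dy = β(H - 1/2, 2 - 2H) |u - v|^{2H - 2} when u ≠ v, where β denotes the Euler beta function and (x)_+ = max(x,0). -/

import Mathlib

open MeasureTheory Set Real

lemma main_case (H : ℝ) (hH : H ∈ Set.Ioo (1/2 : ℝ) 1)
    (u v : ℝ) (hvu : v < u) :
    ∫ y : ℝ, (max (u - y) 0) ^ (-(1/2 + (1 - H))) * (max (v - y) 0) ^ (-(1/2 + (1 - H)))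
      = (∫ z in (0:ℝ)..1, z ^ ((H - 1/2) - 1) * (1 - z) ^ ((2 - 2*H) - 1))
          * (u - v) ^ (2*H - 2) := by
  obtain ⟨hH1, hH2⟩ := hH
  set α : ℝ := -(1/2 + (1 - H)) with hα
  have hαneg : α < 0 := by rw [hα]; linarith
  set d : ℝ := u - v with hd
  have hd0 : 0 < d := by simp [hd]; linarith
  set f : ℝ → ℝ := fun z => v - d * (z / (1 - z)) with hf
  set F : ℝ → ℝ := fun y => (max (u - y) 0) ^ α * (max (v - y) 0) ^ α with hF
  -- Step A : integral over ℝ = integral over Iio v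
  have stepA : ∫ y : ℝ, F y = ∫ y in Iio v, F y := by
    refine (setIntegral_eq_integral_of_forall_compl_eq_zero ?_).symm
    intro y hy
    simp only [mem_Iio, not_lt] at hy
    have : max (v - y) 0 = 0 := max_eq_right (by linarith)
    rw [hF]
    simp [this, Real.zero_rpow hαneg.ne]
  -- image
  have himg : f '' Ioo 0 1 = Iio v := by
    ext y
    simp only [mem_image, mem_Iio, mem_Ioo]
    constructor
    · rintro ⟨z, ⟨hz0, hz1⟩, rfl⟩
      have h1z : 0 < 1 - z := by linarith
      have : 0 < d * (z / (1 - z)) := by positivity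
      simp only [hf]
      linarith
    · intro hy
      refine ⟨(v - y) / (v - y + d), ⟨?_, ?_⟩, ?_⟩
      · have : 0 < v - y := by linarith
        positivity
      · rw [div_lt_one (by linarith)]; linarith
      · have h1 : v - y + d ≠ 0 := ne_of_gt (by linarith)
        simp only [hf]
        field_simp
        rw [show v - y + d - (v - y) = d by ring, mul_div_cancel_left₀ _ hd0.ne']; ring
  -- derivative and injectivity
  have hderiv : ∀ z ∈ Ioo (0:ℝ) 1, HasDerivWithinAt f (-(d / (1 - z)^2)) (Ioo 0 1) z := by
    intro z hz
    have h1z : (1 : ℝ) - z ≠ 0 := by have := hz.2; intro h; simp only [sub_eq_zero] at h; exact absurd h.symm (ne_of_lt hz.2)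
    have h₁ : HasDerivAt (fun z : ℝ => z / (1 - z)) ((1 * (1 - z) - z * (0 - 1)) / (1 - z)^2) z := by
      exact (hasDerivAt_id z).div ((hasDerivAt_const z 1).sub (hasDerivAt_id z)) h1z
    have h₂ : HasDerivAt f (0 - d * ((1 * (1 - z) - z * (0 - 1)) / (1 - z)^2)) z :=
      (hasDerivAt_const z v).sub (h₁.const_mul d)
    have : (0 - d * ((1 * (1 - z) - z * (0 - 1)) / (1 - z)^2)) = -(d / (1 - z)^2) := by
      field_simp
      ring
    rw [this] at h₂
    exact h₂.hasDerivWithinAt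
  have hinj : InjOn f (Ioo 0 1) := by
    intro a ha b hb hab
    have h1a : (1 : ℝ) - a ≠ 0 := by have := ha.2; intro h; rw [sub_eq_zero] at h; exact absurd h.symm (ne_of_lt ha.2)
    have h1b : (1 : ℝ) - b ≠ 0 := by have := hb.2; intro h; rw [sub_eq_zero] at h; exact absurd h.symm (ne_of_lt hb.2)
    simp only [hf, sub_right_inj] at hab
    have hab' : a / (1 - a) = b / (1 - b) := by
      exact mul_left_cancel₀ hd0.ne' hab
    field_simp at hab'
    nlinarith [hab']
  -- change of variables
  have stepC : ∫ y in Iio v, F y = ∫ z in Ioo (0:ℝ) 1, |(-(d / (1 - z)^2))| • F (f z) := by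
    rw [← himg]
    exact integral_image_eq_integral_abs_deriv_smul measurableSet_Ioo hderiv hinj F
  -- pointwise computation
  have stepD : ∫ z in Ioo (0:ℝ) 1, |(-(d / (1 - z)^2))| • F (f z)
      = ∫ z in Ioo (0:ℝ) 1, (z ^ ((H - 1/2) - 1) * (1 - z) ^ ((2 - 2*H) - 1)) * d ^ (2*H - 2) := by
    refine setIntegral_congr_fun measurableSet_Ioo ?_
    intro z hz
    obtain ⟨hz0, hz1⟩ := hz
    have h1z : (0 : ℝ) < 1 - z := by linarith
    have huf : u - f z = d / (1 - z) := by
      simp only [hf]; rw [eq_div_iff h1z.ne']; simp only [hd]; field_simp; ring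
    have hvf : v - f z = d * (z / (1 - z)) := by simp only [hf]; ring
    have hufpos : 0 < u - f z := by rw [huf]; positivity
    have hvfpos : 0 < v - f z := by rw [hvf]; positivity
    have e0 : |(-(d / (1 - z)^2))| = d / (1 - z)^2 := by
      rw [abs_neg, abs_of_pos (by positivity)]
    show |(-(d / (1 - z) ^ 2))| • F (f z)
      = z ^ ((H - 1/2) - 1) * (1 - z) ^ ((2 - 2*H) - 1) * d ^ (2*H - 2)
    rw [smul_eq_mul, e0, hF]
    simp only [huf, hvf]
    rw [max_eq_left (le_of_lt (by positivity : (0:ℝ) < d / (1 - z))),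
        max_eq_left (le_of_lt (by positivity : (0:ℝ) < d * (z / (1 - z))))]
    have hzα : (0:ℝ) < z ^ α := rpow_pos_of_pos hz0 α
    have h1zα : (0:ℝ) < (1 - z) ^ α := rpow_pos_of_pos h1z α
    rw [Real.div_rpow hd0.le h1z.le,
        Real.mul_rpow hd0.le (by positivity),
        Real.div_rpow hz0.le h1z.le]
    have ed : d ^ (2*H - 2) = d ^ α * d ^ α * d := by
      rw [show 2*H - 2 = α + α + 1 by rw [hα]; ring, Real.rpow_add hd0, Real.rpow_add hd0,
        Real.rpow_one]
    have e1z : (1 - z) ^ ((2 - 2*H) - 1) = ((1 - z) ^ α * (1 - z) ^ α * (1 - z)^2)⁻¹ := by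
      rw [show (2 - 2*H) - 1 = -(α + α + 2) by rw [hα]; ring, Real.rpow_neg h1z.le,
        Real.rpow_add h1z, Real.rpow_add h1z, show ((2:ℝ) : ℝ) = ((2:ℕ) : ℝ) by norm_num,
        Real.rpow_natCast]
    have ez : z ^ ((H - 1/2) - 1) = z ^ α := by rw [show (H - 1/2) - 1 = α by rw [hα]; ring]
    rw [ed, e1z, ez]
    field_simp
  rw [stepA, stepC, stepD, integral_mul_const, intervalIntegral.integral_of_le zero_le_one,
    integral_Ioc_eq_integral_Ioo, hd]

theorem integral_prod_pos_part_rpow (H : ℝ) (hH : H ∈ Set.Ioo (1/2 : ℝ) 1)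
    (u v : ℝ) (huv : u ≠ v) :
    ∫ y : ℝ, (max (u - y) 0) ^ (-(1/2 + (1 - H))) * (max (v - y) 0) ^ (-(1/2 + (1 - H)))
      = (∫ z in (0:ℝ)..1, z ^ ((H - 1/2) - 1) * (1 - z) ^ ((2 - 2*H) - 1))
          * |u - v| ^ (2*H - 2) := by
  rcases lt_trichotomy u v with h | h | h
  · rw [abs_of_neg (by linarith : u - v < 0), neg_sub]
    rw [show (∫ y : ℝ, (max (u - y) 0) ^ (-(1/2 + (1 - H))) * (max (v - y) 0) ^ (-(1/2 + (1 - H))))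
        = ∫ y : ℝ, (max (v - y) 0) ^ (-(1/2 + (1 - H))) * (max (u - y) 0) ^ (-(1/2 + (1 - H))) by
      congr 1; ext y; ring]
    exact main_case H hH v u h
  · exact absurd h huv
  · rw [abs_of_pos (by linarith : 0 < u - v)]
    exact main_case H hH u v h
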